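/- Let $\Delta$ be a root system of a semisimple Lie algebra with base $\Sigma$, let $\alpha \in \Sigma$, and let $s$ be a positive integer. Then the set $\Delta[\alpha,s]$ of roots whose coefficient of $\alpha$ (in the $\Sigma$-expansion) is divisible by $s$ is itself a root system, and if $I \subset \Sigma$ with $\alpha \notin I$, then every root of $\Delta$ lying in the span of $I$ belongs to $\Delta[\alpha,s]$. -/

import Mathlib

variable {V : Type*} [AddCommGroup V] [Module ℝ V]

def IsRootSystem (Δ : Set V) : Prop :=
  Δ.Finite ∧ (0 : V) ∉ Δ ∧ (∀ α ∈ Δ, -α ∈ Δ) ∧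
    ∀ α ∈ Δ, ∃ f : V →ₗ[ℝ] ℝ, f α = 2 ∧ (∀ β ∈ Δ, ∃ n : ℤ, f β = (n : ℝ)) ∧
      ∀ β ∈ Δ, β - f β • α ∈ Δ

def IsBase {W : Type*} [AddCommGroup W] [Module ℝ W] (Δ S : Set W) : Prop :=
  S ⊆ Δ ∧ LinearIndependent ℝ ((↑) : S → W) ∧
    ∀ β ∈ Δ, ∃ c : W →₀ ℤ, ↑c.support ⊆ S ∧
      β = c.sum (fun v n => (n : ℝ) • v) ∧ ((∀ v, 0 ≤ c v) ∨ (∀ v, c v ≤ 0))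

/-- `Δ[α,s]`: roots whose coefficient of `α` in the expansion over the base `Sg`
is divisible by `s`. -/
def rootSub (Δ Sg : Set V) (α : V) (s : ℤ) : Set V :=
  {β ∈ Δ | ∀ c : V →₀ ℤ,
    (↑c.support ⊆ Sg ∧ β = c.sum (fun v n => (n : ℝ) • v)) → s ∣ c α}

lemma sum_eq_lc (c : V →₀ ℤ) :
    c.sum (fun v n => (n : ℝ) • v) =
      Finsupp.linearCombination ℝ (id : V → V) (c.mapRange (Int.cast) Int.cast_zero) := by
  rw [Finsupp.linearCombination_apply, Finsupp.sum_mapRange_index (by simp)]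
  rfl

lemma lc_unique {Sg : Set V} (hli : LinearIndependent ℝ ((↑) : Sg → V))
    {l₁ l₂ : V →₀ ℝ} (h1 : ↑l₁.support ⊆ Sg) (h2 : ↑l₂.support ⊆ Sg)
    (h : Finsupp.linearCombination ℝ (id : V → V) l₁
       = Finsupp.linearCombination ℝ (id : V → V) l₂) : l₁ = l₂ := by
  have hmem : l₁ - l₂ ∈ Finsupp.supported ℝ ℝ Sg :=
    Submodule.sub_mem _ ((Finsupp.mem_supported ℝ _).2 h1) ((Finsupp.mem_supported ℝ _).2 h2)
  have := linearIndepOn_iff.1 (linearIndependent_subtype_iff.1 hli) (l₁ - l₂) hmem (by rw [map_sub, h, sub_self])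
  exact sub_eq_zero.1 this

/-- key: coefficients of an integer representation match any real representation. -/
lemma coeff_eq {Sg : Set V} (hli : LinearIndependent ℝ ((↑) : Sg → V))
    {c : V →₀ ℤ} {l : V →₀ ℝ} (hc : ↑c.support ⊆ Sg) (hl : ↑l.support ⊆ Sg)
    (h : c.sum (fun v n => (n : ℝ) • v) = Finsupp.linearCombination ℝ (id : V → V) l)
    (v : V) : (c v : ℝ) = l v := by
  have := lc_unique hli (l₁ := c.mapRange (Int.cast) Int.cast_zero) (l₂ := l)
    (by exact_mod_cast subset_trans (Finset.coe_subset.2 (Finsupp.support_mapRange)) hc)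
    hl (by rw [← sum_eq_lc, h])
  simpa using DFunLike.congr_fun this v

/-- `Δ[α,s]` is a root system, and if `I ⊆ Sg` with `α ∉ I`, every root
lying in the span of `I` belongs to `Δ[α,s]`. -/
theorem stmt18 (Δ Sg : Set V) (hΔ : IsRootSystem Δ) (hSg : IsBase Δ Sg)
    (α : V) (hα : α ∈ Sg) (s : ℤ) (hs : 0 < s)
    (I : Set V) (hI : I ⊆ Sg) (hαI : α ∉ I) :
    IsRootSystem (rootSub Δ Sg α s) ∧
      ∀ β ∈ Δ, β ∈ Submodule.span ℝ I → β ∈ rootSub Δ Sg α s := by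
  obtain ⟨hfin, h0, hneg, hrefl⟩ := hΔ
  obtain ⟨hSgΔ, hli, hbase⟩ := hSg
  constructor
  · refine ⟨hfin.subset (fun x hx => hx.1), fun h => h0 h.1, ?_, ?_⟩
    · rintro β ⟨hβΔ, hβd⟩
      refine ⟨hneg β hβΔ, fun c ⟨hcs, hcsum⟩ => ?_⟩
      obtain ⟨cβ, hcβs, hcβsum, -⟩ := hbase β hβΔ
      have hdiv : s ∣ cβ α := hβd cβ ⟨hcβs, hcβsum⟩
      -- c represents -β; so (c v : ℝ) = -(cβ v)
      have key : (c α : ℝ) = ((-cβ : V →₀ ℤ).mapRange (Int.cast) Int.cast_zero) α := by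
        refine coeff_eq hli hcs ?_ ?_ α
        · exact_mod_cast subset_trans (Finset.coe_subset.2 (Finsupp.support_mapRange))
            (by simpa using hcβs)
        · rw [← sum_eq_lc, ← hcsum, hcβsum]
          rw [Finsupp.sum_neg_index (by simp)]
          simp [Finsupp.sum]
      have : (c α : ℝ) = -(cβ α : ℝ) := by simpa using key
      have : c α = -(cβ α) := by exact_mod_cast this
      rw [this]
      exact dvd_neg.2 hdiv
    · rintro β ⟨hβΔ, hβd⟩
      obtain ⟨f, hf2, hfint, hfrefl⟩ := hrefl β hβΔ
      refine ⟨f, hf2, fun γ hγ => hfint γ hγ.1, ?_⟩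
      rintro γ ⟨hγΔ, hγd⟩
      refine ⟨hfrefl γ hγΔ, fun c ⟨hcs, hcsum⟩ => ?_⟩
      obtain ⟨cβ, hcβs, hcβsum, -⟩ := hbase β hβΔ
      obtain ⟨cγ, hcγs, hcγsum, -⟩ := hbase γ hγΔ
      obtain ⟨n, hn⟩ := hfint γ hγΔ
      set lβ := cβ.mapRange (Int.cast : ℤ → ℝ) Int.cast_zero with hlβ
      set lγ := cγ.mapRange (Int.cast : ℤ → ℝ) Int.cast_zero with hlγ
      have key : (c α : ℝ) = (lγ - (n : ℝ) • lβ) α := by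
        refine coeff_eq hli hcs ?_ ?_ α
        · intro v hv
          simp only [Finset.mem_coe, Finsupp.mem_support_iff, Finsupp.sub_apply,
            Finsupp.smul_apply] at hv
          by_cases h1 : lγ v ≠ 0
          · exact hcγs (by simpa [hlγ, Finsupp.mem_support_iff] using h1)
          · push_neg at h1
            have h2 : lβ v ≠ 0 := by
              intro h2; apply hv; rw [h1, h2]; simp
            exact hcβs (by simpa [hlβ, Finsupp.mem_support_iff] using h2)
        · rw [← hcsum, map_sub, map_smul, ← sum_eq_lc, ← sum_eq_lc, ← hcγsum, ← hcβsum, hn]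
      have : (c α : ℝ) = (cγ α : ℝ) - n * (cβ α : ℝ) := by
        simpa [hlγ, hlβ] using key
      have hcα : c α = cγ α - n * cβ α := by exact_mod_cast this
      rw [hcα]
      exact dvd_sub (hγd cγ ⟨hcγs, hcγsum⟩) (Dvd.dvd.mul_left (hβd cβ ⟨hcβs, hcβsum⟩) n)
  · intro β hβΔ hβspan
    refine ⟨hβΔ, fun c ⟨hcs, hcsum⟩ => ?_⟩
    rw [← Set.image_id I] at hβspan
    obtain ⟨l, hlI, hl⟩ := (Finsupp.mem_span_image_iff_linearCombination ℝ).1 hβspan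
    have hlSg : ↑l.support ⊆ Sg := subset_trans ((Finsupp.mem_supported ℝ _).1 hlI) hI
    have : (c α : ℝ) = l α := coeff_eq hli hcs hlSg (by rw [← hcsum, hl]) α
    have hlα : l α = 0 := by
      by_contra h
      exact hαI ((Finsupp.mem_supported ℝ _).1 hlI (Finsupp.mem_support_iff.2 h))
    have : c α = 0 := by exact_mod_cast this.trans hlα
    rw [this]
    exact dvd_zero s
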